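/- Let X be a norm on ℝ² ≅ ℂ such that the open unit ball of X is disjoint from the perpendicular line ℓ_v = v + span(iv) for every v on the unit circle of X. Then X is a positive scalar multiple of the Euclidean norm. -/

import Mathlib

open Set Complex

noncomputable section

/-- `N` is a norm on the real vector space `E`. -/
structure IsNorm {E : Type*} [AddCommGroup E] [Module ℝ E] (N : E → ℝ) : Prop where
  eq_zero_iff : ∀ v : E, N v = 0 ↔ v = 0
  smul_eq : ∀ (c : ℝ) (v : E), N (c • v) = |c| * N v
  add_le : ∀ u v : E, N (u + v) ≤ N u + N v

/-- Length of the path `φ` on `[a, b]`, with respect to the (norm) function `N`: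
the supremum over partitions `a = t 0 ≤ ⋯ ≤ t n = b` of the sums of distances. -/
noncomputable def pathLen {E : Type*} [AddCommGroup E] [Module ℝ E] (N : E → ℝ)
    (φ : ℝ → E) (a b : ℝ) : ENNReal :=
  ⨆ (n : ℕ) (t : Fin (n + 1) → ℝ) (_ : Monotone t) (_ : t 0 = a)
    (_ : t (Fin.last n) = b),
    ∑ i : Fin n, ENNReal.ofReal (N (φ (t i.succ) - φ (t i.castSucc)))

/-- `φ` is a parametrization of the boundary loop of `B ⊆ ℝ² = ℂ`. -/
def IsBoundaryParam (B : Set ℂ) (φ : ℝ → ℂ) : Prop :=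
  Continuous φ ∧ (∀ t : ℝ, φ (t + 1) = φ t) ∧ Set.InjOn φ (Set.Ico 0 1) ∧
    φ '' Set.Ico 0 1 = frontier B

/-- A convex body in the plane: compact, convex, with nonempty interior. -/
def IsConvexBody (B : Set ℂ) : Prop :=
  IsCompact B ∧ Convex ℝ B ∧ (interior B).Nonempty

/-- `C` is a convex arc from `u` to `v`: either the segment `[u, v]`, or a set whose
union with the segment `[v, u]` is the boundary of a convex body (meeting the
segment only at the endpoints). -/
def IsConvexArc (C : Set ℂ) (u v : ℂ) : Prop :=
  u ∈ C ∧ v ∈ C ∧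
    (C = segment ℝ u v ∨
      ∃ B : Set ℂ, IsConvexBody B ∧ C ∪ segment ℝ v u = frontier B ∧
        C ∩ segment ℝ v u = {u, v})

/-- `φ` is a convex path from `u` to `v`, parametrized on `[0, 1]`. -/
def IsConvexPath (φ : ℝ → ℂ) (u v : ℂ) : Prop :=
  Continuous φ ∧ φ 0 = u ∧ φ 1 = v ∧ Set.InjOn φ (Set.Icc 0 1) ∧
    IsConvexArc (φ '' Set.Icc 0 1) u v

/-- If, for every `v` on the unit circle of `N`, the open unit ball of `N` is
disjoint from the line through `v` perpendicular (Euclideanly) to `[0, v]`,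
then `N` is a positive multiple of the Euclidean norm. -/
theorem stmt18 (N : ℂ → ℝ) (hN : IsNorm N)
    (htangent : ∀ v : ℂ, N v = 1 → ∀ t : ℝ, ¬ N (v + t • (Complex.I * v)) < 1) :
    ∃ c : ℝ, 0 < c ∧ ∀ z : ℂ, N z = c * ‖z‖ := by
  have hN0 : N 0 = 0 := (hN.eq_zero_iff 0).2 rfl
  have hnn : ∀ v, 0 ≤ N v := by
    intro v
    have h1 : N (-v) = N v := by
      rw [show (-v) = (-1 : ℝ) • v by simp, hN.smul_eq]; simp
    have h2 : N (v + -v) ≤ N v + N (-v) := hN.add_le _ _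
    simp only [add_neg_cancel, hN0] at h2
    linarith
  -- Lemma A : adding a perpendicular component can only increase the norm
  have lemA : ∀ (w : ℂ) (t : ℝ), N w ≤ N (w + t • (Complex.I * w)) := by
    intro w t
    rcases eq_or_ne w 0 with rfl | hw
    · simp [hN0]
    · have hNw : 0 < N w :=
        lt_of_le_of_ne (hnn w) (fun h => hw ((hN.eq_zero_iff w).1 h.symm))
      have hv : N ((N w)⁻¹ • w) = 1 := by
        rw [hN.smul_eq, abs_of_pos (inv_pos.2 hNw)]; field_simp
      have hkey := htangent _ hv t
      push_neg at hkey
      have heq : (N w)⁻¹ • w + t • (Complex.I * ((N w)⁻¹ • w))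
          = (N w)⁻¹ • (w + t • (Complex.I * w)) := by
        simp only [smul_add, mul_smul_comm, smul_comm t]
      rw [heq, hN.smul_eq, abs_of_pos (inv_pos.2 hNw)] at hkey
      rw [le_inv_mul_iff₀ hNw, mul_one] at hkey
      exact hkey
  -- Lemma B : cos s * g θ ≤ g (θ + s) where g θ = N (exp (θ I))
  have lemB : ∀ θ s : ℝ, Real.cos s * N (Complex.exp (θ * I)) ≤
      N (Complex.exp ((↑(θ + s)) * I)) := by
    intro θ s
    rcases le_or_gt (Real.cos s) 0 with hc | hc
    · exact le_trans (mul_nonpos_of_nonpos_of_nonneg hc (hnn _)) (hnn _)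
    · have key : Complex.exp ((↑(θ + s)) * I)
          = Real.cos s • (Complex.exp (↑θ * I) + Real.tan s • (I * Complex.exp (↑θ * I))) := by
        have h1 : Complex.exp ((↑(θ + s)) * I)
            = Complex.exp (↑s * I) * Complex.exp (↑θ * I) := by
          rw [← Complex.exp_add]; push_cast; ring_nf
        rw [h1, Complex.exp_mul_I, ← Complex.ofReal_cos, ← Complex.ofReal_sin]
        simp only [Complex.real_smul]
        have hsin : (Real.sin s : ℂ) = (Real.cos s : ℂ) * (Real.tan s : ℂ) := by
          norm_cast
          rw [Real.tan_eq_sin_div_cos]; field_simp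
        rw [hsin]; ring
      calc Real.cos s * N (Complex.exp (↑θ * I))
          ≤ Real.cos s * N (Complex.exp (↑θ * I) + Real.tan s • (I * Complex.exp (↑θ * I))) :=
            mul_le_mul_of_nonneg_left (lemA _ _) hc.le
        _ = N (Complex.exp ((↑(θ + s)) * I)) := by
            rw [key, hN.smul_eq, abs_of_pos hc]
  -- bound : g ≤ M
  set M : ℝ := N 1 + N I with hMdef
  have hgB : ∀ x : ℝ, N (Complex.exp (↑x * I)) ≤ M := by
    intro x
    have hexp : Complex.exp (↑x * I) = Real.cos x • (1 : ℂ) + Real.sin x • I := by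
      rw [Complex.exp_mul_I, ← Complex.ofReal_cos, ← Complex.ofReal_sin]
      simp [Complex.real_smul]
    rw [hexp]
    calc N (Real.cos x • (1 : ℂ) + Real.sin x • I)
        ≤ N (Real.cos x • (1 : ℂ)) + N (Real.sin x • I) := hN.add_le _ _
      _ = |Real.cos x| * N 1 + |Real.sin x| * N I := by rw [hN.smul_eq, hN.smul_eq]
      _ ≤ 1 * N 1 + 1 * N I := by
          gcongr
          · exact hnn 1
          · exact Real.abs_cos_le_one x
          · exact hnn I
          · exact Real.abs_sin_le_one x
      _ = M := by rw [hMdef]; ring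
  -- Lemma C : quadratic modulus of continuity
  have lemC : ∀ (θ s : ℝ), |s| ≤ 1 →
      |N (Complex.exp ((↑(θ + s)) * I)) - N (Complex.exp (↑θ * I))| ≤ M * s ^ 2 := by
    intro θ s hs
    have h1 := lemB θ s
    have h2 := lemB (θ + s) (-s)
    rw [show θ + s + -s = θ by ring, Real.cos_neg] at h2
    have hcb : 1 - s ^ 2 / 2 ≤ Real.cos s := Real.one_sub_sq_div_two_le_cos
    have hb0 := hgB θ
    have hb1 := hgB (θ + s)
    have hn0 := hnn (Complex.exp (↑θ * I))
    have hn1 := hnn (Complex.exp ((↑(θ + s)) * I))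
    have hs2 : s ^ 2 ≤ 1 := by nlinarith [abs_nonneg s, _root_.sq_abs s]
    have hM : 0 ≤ M := le_trans hn0 hb0
    rw [abs_sub_le_iff]
    constructor <;> nlinarith
  -- iterate
  have lemD : ∀ (n : ℕ) (a h : ℝ), |h| ≤ 1 →
      |N (Complex.exp ((↑(a + n * h)) * I)) - N (Complex.exp (↑a * I))| ≤ n * (M * h ^ 2) := by
    intro n
    induction n with
    | zero => intro a h _; simp
    | succ n ih =>
        intro a h hh
        have h1 := lemC (a + n * h) h hh
        have h2 := ih a h hh
        have hrw : a + (↑(n + 1) : ℕ) * h = (a + n * h) + h := by push_cast; ring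
        rw [hrw]
        calc |N (Complex.exp ((↑(a + ↑n * h + h)) * I)) - N (Complex.exp (↑a * I))|
            ≤ |N (Complex.exp ((↑(a + ↑n * h + h)) * I)) - N (Complex.exp ((↑(a + ↑n * h)) * I))|
              + |N (Complex.exp ((↑(a + ↑n * h)) * I)) - N (Complex.exp (↑a * I))| :=
              abs_sub_le _ _ _
          _ ≤ M * h ^ 2 + n * (M * h ^ 2) := add_le_add h1 h2
          _ = (↑(n + 1) : ℕ) * (M * h ^ 2) := by push_cast; ring
  -- constancy
  have hM : 0 ≤ M := le_trans (hnn _) (hgB 0)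
  have hconst : ∀ x : ℝ, N (Complex.exp (↑x * I)) = N 1 := by
    intro x
    have hg0 : N (Complex.exp ((0 : ℝ) * I)) = N 1 := by norm_num
    have hsmall : ∀ ε : ℝ, 0 < ε → |N (Complex.exp (↑x * I)) - N 1| ≤ 0 + ε := by
      intro ε hε
      obtain ⟨n, hn⟩ := exists_nat_gt (max |x| (M * x ^ 2 / ε))
      have hnx : |x| < n := lt_of_le_of_lt (le_max_left _ _) hn
      have hne : M * x ^ 2 / ε < n := lt_of_le_of_lt (le_max_right _ _) hn
      have hnpos : (0 : ℝ) < n := lt_of_le_of_lt (abs_nonneg x) hnx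
      have hh : |x / n| ≤ 1 := by
        rw [abs_div, abs_of_pos hnpos, div_le_one hnpos]
        exact hnx.le
      have hD := lemD n 0 (x / n) hh
      rw [show (0 : ℝ) + n * (x / n) = x by field_simp; ring] at hD
      rw [hg0] at hD
      have hcalc : (n : ℝ) * (M * (x / n) ^ 2) = M * x ^ 2 / n := by
        field_simp
      rw [hcalc] at hD
      have : M * x ^ 2 / n ≤ ε := by
        rw [div_le_iff₀ hnpos]
        have : M * x ^ 2 < n * ε := by
          have := (div_lt_iff₀ hε).1 hne
          linarith
        linarith
      linarith
    have := le_of_forall_pos_le_add hsmall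
    have h0 : |N (Complex.exp (↑x * I)) - N 1| = 0 :=
      le_antisymm this (abs_nonneg _)
    have := abs_eq_zero.1 h0
    linarith
  -- conclusion
  have hc1 : 0 < N 1 :=
    lt_of_le_of_ne (hnn 1) (fun h => one_ne_zero ((hN.eq_zero_iff 1).1 h.symm))
  refine ⟨N 1, hc1, fun z => ?_⟩
  rcases eq_or_ne z 0 with rfl | hz
  · simp [hN0]
  · have hzeq : z = (‖z‖ : ℝ) • Complex.exp (↑z.arg * I) := by
      rw [Complex.real_smul, Complex.norm_mul_exp_arg_mul_I]
    calc N z = N ((‖z‖ : ℝ) • Complex.exp (↑z.arg * I)) := by rw [← hzeq]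
      _ = |‖z‖| * N (Complex.exp (↑z.arg * I)) := hN.smul_eq _ _
      _ = ‖z‖ * N 1 := by rw [_root_.abs_of_nonneg (norm_nonneg z), hconst]
      _ = N 1 * ‖z‖ := mul_comm _ _


end
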